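/- Let G be a finite simple graph with edge set {e_1,…,e_m} and fix a linear order < on V(G). For v ∈ V(G) define vec(v) ∈ {0,1,□}^m by: vec(v)[i] = □ if v is not an endpoint of e_i; and if e_i = {u,v}, then vec(v)[i] = 0 if v < u and vec(v)[i] = 1 if u < v. Then G has a proper 3-coloring if and only if V(G) can be partitioned into three sets P_1, P_2, P_3 such that δ(vec(u), vec(v)) = 0 for all u, v lying in the same part; equivalently, if and only if the multiset {vec(v) : v ∈ V(G)} admits a completion together with a partition into at most 3 parts, each of diameter 0. -/

import Mathlib

open scoped Classical

/-- δ(a,b) for incomplete vectors: the number of coordinates on which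
both entries are known and differ. -/
noncomputable def pdist {ι : Type} [Fintype ι] (a b : ι → Option Bool) : ℕ :=
  (Finset.univ.filter fun i => ∃ x y : Bool, a i = some x ∧ b i = some y ∧ x ≠ y).card

/-- `Mc` is a completion of `M`: a multiset of complete vectors in bijection with `M`,
agreeing with the corresponding vectors on all non-missing entries. -/
def IsCompletion {ι : Type} (M : Multiset (ι → Option Bool))
    (Mc : Multiset (ι → Bool)) : Prop :=
  Multiset.Rel (fun a c => ∀ i (x : Bool), a i = some x → c i = x) M Mc

/-- The multiset `Mc` of complete vectors can be partitioned into at most `k` parts,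
each of diameter at most `r`. -/
def HasDiamPartitionM {ι : Type} [Fintype ι] (Mc : Multiset (ι → Bool)) (k r : ℕ) : Prop :=
  ∃ P : Multiset (Multiset (ι → Bool)), Multiset.card P ≤ k ∧ P.join = Mc ∧
    ∀ p ∈ P, ∀ a ∈ p, ∀ b ∈ p, hammingDist a b ≤ r

lemma rel_to_fun {α β : Type} [Nonempty β] (R : α → β → Prop) :
    ∀ {s : Multiset α} {t : Multiset β}, Multiset.Rel R s t → s.Nodup →
      ∃ f : α → β, (∀ a ∈ s, R a (f a)) ∧ s.map f = t := by
  intro s t h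
  induction h with
  | zero => exact fun _ => ⟨fun _ => Classical.arbitrary β, by simp, by simp⟩
  | @cons a b s' t' hab hrel ih =>
    intro hnd
    rw [Multiset.nodup_cons] at hnd
    obtain ⟨f', hf1, hf2⟩ := ih hnd.2
    refine ⟨Function.update f' a b, ?_, ?_⟩
    · intro x hx
      rcases Multiset.mem_cons.1 hx with rfl | hx
      · simp [hab]
      · rw [Function.update_of_ne (fun h => hnd.1 (by rwa [h] at hx))]
        exact hf1 x hx
    · rw [Multiset.map_cons, Function.update_self]
      congr 1
      rw [← hf2]
      exact Multiset.map_congr rfl fun x hx =>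
        Function.update_of_ne (fun h => hnd.1 (by rwa [h] at hx)) _ _

lemma filter_tri {α : Type} (c : α → Fin 3) (s : Multiset α) :
    s.filter (fun v => c v = 0) + s.filter (fun v => c v = 1) +
      s.filter (fun v => c v = 2) = s := by
  ext x
  simp only [Multiset.count_add, Multiset.count_filter]
  have h3 : ∀ k : Fin 3, k = 0 ∨ k = 1 ∨ k = 2 := by decide
  rcases h3 (c x) with h | h | h <;> simp [h]

theorem statement_17 {V : Type} [Fintype V] [LinearOrder V] {m : ℕ}
    (G : SimpleGraph V) (e : Fin m ≃ G.edgeSet)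
    (vec : V → Fin m → Option Bool)
    (hnone : ∀ v i, v ∉ (e i).1 → vec v i = none)
    (hval : ∀ i u v, (e i).1 = s(u, v) → u < v →
      vec v i = some true ∧ vec u i = some false) :
    (G.Colorable 3 ↔
      ∃ c : V → Fin 3, ∀ u v : V, c u = c v → pdist (vec u) (vec v) = 0) ∧
    (G.Colorable 3 ↔
      ∃ Mc : Multiset (Fin m → Bool),
        IsCompletion ((Finset.univ : Finset V).val.map vec) Mc ∧
        HasDiamPartitionM Mc 3 0) := by
  -- pdist = 0 iff not adjacent
  have hadj_pdist : ∀ u v : V, G.Adj u v → pdist (vec u) (vec v) ≠ 0 := by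
    intro u v huv
    have hmem : s(u, v) ∈ G.edgeSet := huv
    set i := e.symm ⟨s(u, v), hmem⟩ with hi
    have hei : (e i).1 = s(u, v) := by rw [hi, Equiv.apply_symm_apply]
    have hne : u ≠ v := G.ne_of_adj huv
    have hkey : ∃ x y : Bool, vec u i = some x ∧ vec v i = some y ∧ x ≠ y := by
      rcases lt_or_gt_of_ne hne with hlt | hlt
      · obtain ⟨h1, h2⟩ := hval i u v hei hlt
        exact ⟨false, true, h2, h1, by simp⟩
      · obtain ⟨h1, h2⟩ := hval i v u (by rw [hei, Sym2.eq_swap]) hlt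
        exact ⟨true, false, h1, h2, by simp⟩
    intro h0
    rw [pdist, Finset.card_eq_zero, Finset.filter_eq_empty_iff] at h0
    exact h0 (Finset.mem_univ i) hkey
  have hpdist_adj : ∀ u v : V, pdist (vec u) (vec v) = 0 → ¬ G.Adj u v :=
    fun u v h hadj => hadj_pdist u v hadj h
  -- pdist = 0 when no adjacency
  have hnadj_pdist : ∀ u v : V, ¬ G.Adj u v → pdist (vec u) (vec v) = 0 := by
    intro u v hna
    rw [pdist, Finset.card_eq_zero, Finset.filter_eq_empty_iff]
    rintro i - ⟨x, y, hx, hy, hxy⟩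
    have hu : u ∈ (e i).1 := by
      by_contra h; rw [hnone u i h] at hx; cases hx
    have hv : v ∈ (e i).1 := by
      by_contra h; rw [hnone v i h] at hy; cases hy
    have hne : u ≠ v := by
      rintro rfl; rw [hx] at hy; exact hxy (Option.some.inj hy)
    have : (e i).1 = s(u, v) := ((Sym2.mem_and_mem_iff hne).1 ⟨hu, hv⟩)
    exact hna (G.mem_edgeSet.1 (this ▸ (e i).2))
  have hAB : G.Colorable 3 ↔
      ∃ c : V → Fin 3, ∀ u v : V, c u = c v → pdist (vec u) (vec v) = 0 := by
    constructor
    · rintro ⟨C⟩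
      refine ⟨C, fun u v hcc => hnadj_pdist u v fun hadj => C.valid hadj hcc⟩
    · rintro ⟨c, hc⟩
      exact ⟨⟨c, fun {u v} hadj hcc => hadj_pdist u v hadj (hc u v hcc)⟩⟩
  refine ⟨hAB, hAB.trans ?_⟩
  constructor
  · -- B → C
    rintro ⟨c, hc⟩
    set w : Fin 3 → Fin m → Bool :=
      fun k i => decide (∃ v, c v = k ∧ vec v i = some true) with hw
    have hcomp : ∀ v i (x : Bool), vec v i = some x → w (c v) i = x := by
      intro v i x hx
      cases x with
      | true => simp only [hw, decide_eq_true_eq]; exact ⟨v, rfl, hx⟩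
      | false =>
        simp only [hw]
        rw [decide_eq_false_iff_not]
        rintro ⟨u, hcu, hu⟩
        have h0 := hc u v hcu
        rw [pdist, Finset.card_eq_zero, Finset.filter_eq_empty_iff] at h0
        exact h0 (Finset.mem_univ i) ⟨true, false, hu, hx, by simp⟩
    refine ⟨(Finset.univ : Finset V).val.map (fun v => w (c v)), ?_, ?_⟩
    · rw [IsCompletion, Multiset.rel_map]
      exact Multiset.rel_refl_of_refl_on fun v _ => hcomp v
    · set pt : Fin 3 → Multiset (Fin m → Bool) :=
        fun k => ((Finset.univ : Finset V).val.filter (fun v => c v = k)).map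
          (fun v => w (c v)) with hpt
      have hconst : ∀ (k : Fin 3) a, a ∈ pt k → a = w k := by
        intro k a ha
        obtain ⟨va, hva, rfl⟩ := Multiset.mem_map.1 ha
        rw [(Multiset.mem_filter.1 hva).2]
      refine ⟨pt 0 ::ₘ pt 1 ::ₘ pt 2 ::ₘ 0, by simp, ?_, ?_⟩
      · simp only [Multiset.join_cons, Multiset.join_zero, add_zero, hpt]
        rw [← add_assoc, ← Multiset.map_add, ← Multiset.map_add, filter_tri]
      · intro p hp a ha b hb
        simp only [Multiset.mem_cons, Multiset.mem_singleton,
          Multiset.notMem_zero, or_false] at hp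
        rcases hp with rfl | rfl | rfl <;>
          · rw [hconst _ a ha, hconst _ b hb]
            simp
  · -- C → B
    rintro ⟨Mc, hMc, P, hPcard, hPjoin, hPdiam⟩
    have hnd : ((Finset.univ : Finset V).val).Nodup := (Finset.univ : Finset V).nodup
    rw [IsCompletion, Multiset.rel_map_left] at hMc
    obtain ⟨f, hf1, hf2⟩ := rel_to_fun _ hMc hnd
    obtain ⟨l, hl⟩ := Quot.exists_rep P
    replace hl : P = ↑l := hl.symm
    have hlen : l.length ≤ 3 := by
      rw [hl, Multiset.coe_card] at hPcard; exact hPcard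
    have hpart : ∀ v : V, ∃ p ∈ l, f v ∈ p := by
      intro v
      have : f v ∈ P.join := by
        rw [hPjoin, ← hf2]; exact Multiset.mem_map_of_mem f (Finset.mem_univ_val v)
      rw [Multiset.mem_join] at this
      obtain ⟨p, hp, hfp⟩ := this
      exact ⟨p, by rwa [hl, Multiset.mem_coe] at hp, hfp⟩
    set pa : V → Multiset (Fin m → Bool) := fun v => Classical.choose (hpart v) with hpa
    have hpa1 : ∀ v, pa v ∈ l := fun v => (Classical.choose_spec (hpart v)).1
    have hpa2 : ∀ v, f v ∈ pa v := fun v => (Classical.choose_spec (hpart v)).2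
    refine ⟨fun v => ⟨l.idxOf (pa v), lt_of_lt_of_le (List.idxOf_lt_length_iff.2 (hpa1 v)) hlen⟩,
      ?_⟩
    intro u v hcc
    have hidx : l.idxOf (pa u) = l.idxOf (pa v) := by
      simpa using congrArg Fin.val hcc
    have hpuv : pa u = pa v := by
      have h1 := List.idxOf_get (List.idxOf_lt_length_iff.2 (hpa1 u))
      have h2 := List.idxOf_get (List.idxOf_lt_length_iff.2 (hpa1 v))
      rw [← h1, ← h2]
      congr 1
      exact Fin.ext hidx
    have hfuv : f u = f v := by
      have hmemP : pa u ∈ P := by rw [hl, Multiset.mem_coe]; exact hpa1 u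
      have := hPdiam _ hmemP (f u) (hpa2 u) (f v) (hpuv ▸ hpa2 v)
      exact hammingDist_eq_zero.1 (Nat.le_zero.1 this)
    rw [pdist, Finset.card_eq_zero, Finset.filter_eq_empty_iff]
    rintro i - ⟨x, y, hx, hy, hxy⟩
    have h1 := hf1 u (Finset.mem_univ_val u) i x hx
    have h2 := hf1 v (Finset.mem_univ_val v) i y hy
    rw [hfuv] at h1
    exact hxy (h1 ▸ h2)
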